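/- Let (X,d) be a metric space and G ⊂ X an open set with nonempty boundary ∂G. Then the function j̃_G defined by j̃_G(x,y) = (1/2)·log((1 + d(x,y)/δ(x))·(1 + d(x,y)/δ(y))), where δ(x) = dist(x, ∂G), is a metric on G ∪ (X ∖ closure(G)) = X ∖ ∂G. -/

import Mathlib

open Real Filter

/-- The Gehring–Osgood metric associated to an open set `G`, where
`δ(x) = dist(x, ∂G)`. -/
noncomputable def jGehringOsgood {X : Type*} [MetricSpace X] (G : Set X) (x y : X) : ℝ :=
  (1 / 2) * Real.log ((1 + dist x y / Metric.infDist x (frontier G)) *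
    (1 + dist x y / Metric.infDist y (frontier G)))

private lemma jGO_aux_factor {a b c u w : ℝ} (hu : 0 < u) (hw : 0 < w)
    (ha : a ≤ b + c) (hb : 0 ≤ b) (hc : 0 ≤ c) (hwu : w ≤ u + b) :
    1 + a / u ≤ (1 + b / u) * (1 + c / w) := by
  have h1 : (0:ℝ) < u * w := by positivity
  have key : (u + a) * w ≤ (u + b) * (w + c) := by nlinarith [mul_nonneg hc hb]
  rw [show (1:ℝ) + a / u = (u + a) * w / (u * w) by field_simp,
    show (1 + b / u) * (1 + c / w) = (u + b) * (w + c) / (u * w) by field_simp,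
    div_le_div_iff₀ h1 h1]
  nlinarith [mul_le_mul_of_nonneg_right key (le_of_lt h1)]

theorem stmt_1 {X : Type*} [MetricSpace X] (G : Set X)
    (hG : IsOpen G) (hGb : (frontier G).Nonempty) :
    (∀ x ∉ frontier G, ∀ y ∉ frontier G, 0 ≤ jGehringOsgood G x y) ∧
    (∀ x ∉ frontier G, ∀ y ∉ frontier G, (jGehringOsgood G x y = 0 ↔ x = y)) ∧
    (∀ x ∉ frontier G, ∀ y ∉ frontier G, jGehringOsgood G x y = jGehringOsgood G y x) ∧
    (∀ x ∉ frontier G, ∀ y ∉ frontier G, ∀ z ∉ frontier G,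
      jGehringOsgood G x y ≤ jGehringOsgood G x z + jGehringOsgood G z y) := by
  have δpos : ∀ x ∉ frontier G, 0 < Metric.infDist x (frontier G) := fun x hx =>
    (isClosed_frontier.notMem_iff_infDist_pos hGb).1 hx
  have fac_ge : ∀ (x y : X), 0 < Metric.infDist x (frontier G) →
      (1:ℝ) ≤ 1 + dist x y / Metric.infDist x (frontier G) := by
    intro x y hx
    have : 0 ≤ dist x y / Metric.infDist x (frontier G) := by positivity
    linarith
  have prod_ge : ∀ x ∉ frontier G, ∀ y ∉ frontier G,
      (1:ℝ) ≤ (1 + dist x y / Metric.infDist x (frontier G)) *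
        (1 + dist x y / Metric.infDist y (frontier G)) := by
    intro x hx y hy
    have h1 := fac_ge x y (δpos x hx)
    have h2 := fac_ge y x (δpos y hy)
    rw [dist_comm y x] at h2
    nlinarith
  refine ⟨fun x hx y hy => ?_, fun x hx y hy => ?_, fun x hx y hy => ?_,
    fun x hx y hy z hz => ?_⟩
  · have := prod_ge x hx y hy
    unfold jGehringOsgood
    have := Real.log_nonneg this
    linarith
  · constructor
    · intro h
      unfold jGehringOsgood at h
      have hlog : Real.log ((1 + dist x y / Metric.infDist x (frontier G)) *
          (1 + dist x y / Metric.infDist y (frontier G))) = 0 := by linarith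
      have hprod := prod_ge x hx y hy
      have heq : (1 + dist x y / Metric.infDist x (frontier G)) *
          (1 + dist x y / Metric.infDist y (frontier G)) = 1 := by
        rcases Real.log_eq_zero.1 hlog with h | h | h
        · linarith
        · exact h
        · linarith
      have h1 := fac_ge x y (δpos x hx)
      have h2 := fac_ge y x (δpos y hy)
      rw [dist_comm y x] at h2
      have hdle : dist x y / Metric.infDist x (frontier G) ≤ 0 := by nlinarith
      have hd0 : dist x y = 0 := by
        by_contra hne
        have : 0 < dist x y := lt_of_le_of_ne dist_nonneg (Ne.symm hne)
        have : 0 < dist x y / Metric.infDist x (frontier G) := by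
          exact div_pos this (δpos x hx)
        linarith
      exact dist_eq_zero.1 hd0
    · intro h
      subst h
      unfold jGehringOsgood
      simp
  · unfold jGehringOsgood
    rw [dist_comm x y]
    ring_nf
  · set u := Metric.infDist x (frontier G)
    set v := Metric.infDist y (frontier G)
    set w := Metric.infDist z (frontier G)
    have hu : 0 < u := δpos x hx
    have hv : 0 < v := δpos y hy
    have hw : 0 < w := δpos z hz
    have hwu : w ≤ u + dist x z := by
      rw [dist_comm x z]; exact Metric.infDist_le_infDist_add_dist
    have hwv : w ≤ v + dist z y :=
      Metric.infDist_le_infDist_add_dist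
    have key1 : 1 + dist x y / u ≤ (1 + dist x z / u) * (1 + dist z y / w) :=
      jGO_aux_factor hu hw (dist_triangle x z y) dist_nonneg dist_nonneg hwu
    have key2 : 1 + dist x y / v ≤ (1 + dist z y / v) * (1 + dist x z / w) :=
      jGO_aux_factor hv hw (by linarith [dist_triangle x z y]) dist_nonneg
        dist_nonneg hwv
    have p1 : (0:ℝ) < 1 + dist x y / u := by positivity
    have p2 : (0:ℝ) < 1 + dist x y / v := by positivity
    have q1 : (0:ℝ) < 1 + dist x z / u := by positivity
    have q2 : (0:ℝ) < 1 + dist x z / w := by positivity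
    have r1 : (0:ℝ) < 1 + dist z y / w := by positivity
    have r2 : (0:ℝ) < 1 + dist z y / v := by positivity
    have hP : (1 + dist x y / u) * (1 + dist x y / v) ≤
        ((1 + dist x z / u) * (1 + dist x z / w)) *
        ((1 + dist z y / w) * (1 + dist z y / v)) := by
      calc (1 + dist x y / u) * (1 + dist x y / v)
          ≤ ((1 + dist x z / u) * (1 + dist z y / w)) *
            ((1 + dist z y / v) * (1 + dist x z / w)) :=
            mul_le_mul key1 key2 (le_of_lt p2) (by positivity)
        _ = _ := by ring
    unfold jGehringOsgood
    rw [← mul_add]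
    rw [← Real.log_mul (by positivity) (by positivity)]
    have := Real.log_le_log (by positivity) hP
    linarith
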